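/- Let 1 < p < q be relatively prime integers. Then the rational function (t^{pq}-1)(t-1)/((t^p-1)(t^q-1)) is a polynomial in t of the form \sum_{i=0}^{2n}(-1)^i t^{a_i} for some nonnegative integer n and a strictly decreasing sequence of nonnegative integers a_0 > a_1 > ... > a_{2n} with a_0 = (p-1)(q-1) and a_{2n} = 0. -/

import Mathlib

open Polynomial
open scoped Classical

namespace AlexAux

/-- membership in the numerical semigroup generated by `p` and `q` -/
def Rep (p q k : ℕ) : Prop := ∃ i j : ℕ, i * p + j * q = k

/-- indicator of `Rep` -/
noncomputable def ind (p q k : ℕ) : ℤ := if Rep p q k then 1 else 0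

noncomputable def c (p q k : ℕ) : ℤ := ind p q k - if k = 0 then 0 else ind p q (k - 1)

lemma ind_zero_or_one (p q k : ℕ) : ind p q k = 0 ∨ ind p q k = 1 := by
  unfold ind; split <;> simp

lemma ind_of_rep {p q k : ℕ} (h : Rep p q k) : ind p q k = 1 := if_pos h
lemma ind_of_not_rep {p q k : ℕ} (h : ¬ Rep p q k) : ind p q k = 0 := if_neg h

lemma rep_zero (p q : ℕ) : Rep p q 0 := ⟨0, 0, by simp⟩

section PQ

variable {p q : ℕ} (hp : 1 < p) (hpq : p < q) (hco : Nat.Coprime p q)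

include hp hpq in
/-- `(p-1)*(q-1) = p*q - p - q + 1` -/
lemma N_eq : (p - 1) * (q - 1) = p * q - p - q + 1 := by
  have h1 : 1 ≤ p := hp.le
  have h2 : 1 ≤ q := (hp.trans hpq).le
  have h3 : p + q ≤ p * q := Nat.add_le_mul hp (hp.trans hpq)
  zify [h1, h2, Nat.sub_sub, h3]
  ring

include hp hpq hco in
lemma rep_of_ge {k : ℕ} (hk : (p - 1) * (q - 1) ≤ k) : Rep p q k := by
  have hq : 1 < q := hp.trans hpq
  have H := frobeniusNumber_pair hco hp hq
  rw [FrobeniusNumber] at H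
  by_contra hrep
  have hk' : k ∈ {k | k ∉ AddSubmonoid.closure ({p, q} : Set ℕ)} := by
    simp only [Set.mem_setOf_eq, AddSubmonoid.mem_closure_pair]
    rintro ⟨a, b, hab⟩
    exact hrep ⟨a, b, by simpa [smul_eq_mul] using hab⟩
  have := H.2 hk'
  rw [N_eq hp hpq] at hk
  omega

include hp hpq hco in
lemma not_rep_frob : ¬ Rep p q ((p - 1) * (q - 1) - 1) := by
  have hq : 1 < q := hp.trans hpq
  have H := frobeniusNumber_pair hco hp hq
  rw [FrobeniusNumber] at H
  have h1 := H.1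
  simp only [Set.mem_setOf_eq, AddSubmonoid.mem_closure_pair] at h1
  rintro ⟨i, j, hij⟩
  rw [N_eq hp hpq] at hij
  exact h1 ⟨i, j, by simp only [smul_eq_mul]; omega⟩

include hp hpq hco in
lemma coeff_key (k : ℕ) :
    ind p q k - (if p ≤ k then ind p q (k - p) else 0) =
    (if ∃ j ∈ Finset.range p, q * j = k then 1 else 0) := by
  have hp0 : 0 < p := by omega
  have hq0 : 0 < q := by omega
  by_cases hr : Rep p q k
  · by_cases hs : p ≤ k ∧ Rep p q (k - p)
    · rw [ind_of_rep hr, if_pos hs.1, ind_of_rep hs.2, if_neg]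
      · ring
      rintro ⟨j, hj, hjk⟩
      rw [Finset.mem_range] at hj
      obtain ⟨a, b, hab⟩ := hs.2
      have hk : (a + 1) * p + b * q = q * j := by
        have := hs.1
        have e1 : (a + 1) * p = a * p + p := by ring
        have e2 : q * j = j * q := by ring
        omega
      have hbj : b ≤ j := by nlinarith
      have hdvd : p ∣ (j - b) * q := ⟨a + 1, by zify [hbj]; linarith [hk]⟩
      have hdvd2 : p ∣ j - b := (Nat.Coprime.dvd_of_dvd_mul_right hco) hdvd
      have hjb : j - b = 0 := by
        by_contra h
        have : p ≤ j - b := Nat.le_of_dvd (by omega) hdvd2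
        omega
      have : (a + 1) * p = 0 := by zify [hbj] at hjb ⊢; nlinarith [hk]
      nlinarith
    · rw [ind_of_rep hr]
      have h2 : (if p ≤ k then ind p q (k - p) else 0) = 0 := by
        split
        · rename_i h
          refine ind_of_not_rep fun hrep => hs ⟨h, hrep⟩
        · rfl
      rw [h2, if_pos]
      · ring
      obtain ⟨i, j, hij⟩ := hr
      have hi : i = 0 := by
        by_contra hi0
        have hip : p ≤ i * p := Nat.le_mul_of_pos_left p (by omega)
        refine hs ⟨by omega, i - 1, j, ?_⟩
        have : (i - 1) * p + p = i * p := by zify [Nat.one_le_iff_ne_zero.2 hi0]; ring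
        omega
      subst hi
      simp only [Nat.zero_mul, Nat.zero_add] at hij
      have hjp : j < p := by
        by_contra hjp0
        push_neg at hjp0
        have hkp : p ≤ k := by
          have h1 : p * q ≤ j * q := Nat.mul_le_mul_right q hjp0
          have h2 : p ≤ p * q := Nat.le_mul_of_pos_right p hq0
          omega
        refine hs ⟨hkp, q - 1, j - p, ?_⟩
        have : (q - 1) * p + (j - p) * q + p = j * q := by zify [hjp0, hq0]; ring
        omega
      exact ⟨j, Finset.mem_range.2 hjp, by rw [Nat.mul_comm]; exact hij⟩
  · rw [ind_of_not_rep hr]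
    have h2 : (if p ≤ k then ind p q (k - p) else 0) = 0 := by
      split
      · rename_i h
        refine ind_of_not_rep fun ⟨a, b, hab⟩ => hr ⟨a + 1, b, ?_⟩
        have e1 : (a + 1) * p = a * p + p := by ring
        omega
      · rfl
    rw [h2, if_neg]
    · ring
    rintro ⟨j, hj, hjk⟩
    exact hr ⟨0, j, by rw [Nat.zero_mul, Nat.zero_add, Nat.mul_comm]; exact hjk⟩

end PQ

noncomputable def Hs (p q : ℕ) : PowerSeries ℤ := PowerSeries.mk (fun k => ind p q k)

noncomputable def D (p q : ℕ) : Polynomial ℤ :=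
  ∑ k ∈ Finset.range ((p - 1) * (q - 1) + 1), Polynomial.C (c p q k) * Polynomial.X ^ k

lemma D_coeff (p q m : ℕ) :
    (D p q).coeff m = if m < (p - 1) * (q - 1) + 1 then c p q m else 0 := by
  unfold D
  rw [Polynomial.finset_sum_coeff]
  simp only [Polynomial.coeff_C_mul, Polynomial.coeff_X_pow, mul_ite, mul_one, mul_zero]
  rw [Finset.sum_ite_eq (Finset.range _) m (fun k => c p q k)]
  simp [Finset.mem_range]

section PQ2

variable {p q : ℕ} (hp : 1 < p) (hpq : p < q) (hco : Nat.Coprime p q)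

include hp hpq hco in
lemma hs_mul : Hs p q * (1 - (PowerSeries.X : PowerSeries ℤ) ^ p) =
    ((∑ j ∈ Finset.range p, ((X : Polynomial ℤ) ^ q) ^ j : Polynomial ℤ) : PowerSeries ℤ) := by
  ext k
  have h1 : Hs p q * (1 - (PowerSeries.X : PowerSeries ℤ) ^ p) =
      Hs p q - Hs p q * PowerSeries.X ^ p := by ring
  rw [h1, map_sub, PowerSeries.coeff_mul_X_pow']
  have h2 : (PowerSeries.coeff k) (Hs p q) = ind p q k := PowerSeries.coeff_mk _ _
  have h3 : ∀ d, (PowerSeries.coeff d) (Hs p q) = ind p q d := fun d => PowerSeries.coeff_mk _ _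
  rw [h2, h3, Polynomial.coeff_coe, Polynomial.finset_sum_coeff]
  simp only [← pow_mul, Polynomial.coeff_X_pow]
  have h4 : (∑ j ∈ Finset.range p, if k = q * j then (1:ℤ) else 0) =
      if ∃ j ∈ Finset.range p, q * j = k then 1 else 0 := by
    split
    · rename_i h
      obtain ⟨j0, hj0, hj0k⟩ := h
      rw [Finset.sum_eq_single_of_mem j0 hj0]
      · rw [if_pos hj0k.symm]
      · intro b hb hne
        rw [if_neg]
        intro hbk
        have hqpos : 0 < q := by omega
        exact hne (Nat.eq_of_mul_eq_mul_left hqpos (hj0k.trans hbk)).symm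
    · rename_i h
      push_neg at h
      apply Finset.sum_eq_zero
      intro j hj
      rw [if_neg]
      intro hkj
      exact h j hj hkj.symm
  rw [h4, ← coeff_key hp hpq hco k]

include hp hpq hco in
lemma key_ps : Hs p q * (1 - (PowerSeries.X : PowerSeries ℤ) ^ p) *
    (1 - (PowerSeries.X : PowerSeries ℤ) ^ q) = 1 - PowerSeries.X ^ (p * q) := by
  rw [hs_mul hp hpq hco]
  have hpoly : (∑ j ∈ Finset.range p, ((X : Polynomial ℤ) ^ q) ^ j) * (1 - X ^ q) =
      1 - X ^ (p * q) := by
    have hg := geom_sum_mul ((X : Polynomial ℤ) ^ q) p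
    rw [← pow_mul, mul_comm q p] at hg
    linear_combination -hg
  have h2 := congrArg (fun r : Polynomial ℤ => (r : PowerSeries ℤ)) hpoly
  simp only [Polynomial.coe_mul, Polynomial.coe_sub, Polynomial.coe_one, Polynomial.coe_pow,
    Polynomial.coe_X] at h2
  exact h2

include hp hpq hco in
lemma coe_D : ((D p q : Polynomial ℤ) : PowerSeries ℤ) = (1 - PowerSeries.X) * Hs p q := by
  ext k
  have h1 : (1 - (PowerSeries.X : PowerSeries ℤ)) * Hs p q =
      Hs p q - Hs p q * PowerSeries.X ^ 1 := by ring
  rw [h1, map_sub, PowerSeries.coeff_mul_X_pow', Polynomial.coeff_coe, D_coeff]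
  have h3 : ∀ d, (PowerSeries.coeff d) (Hs p q) = ind p q d := fun d => PowerSeries.coeff_mk _ _
  rw [h3, h3]
  unfold c
  rcases Nat.lt_or_ge k ((p - 1) * (q - 1) + 1) with hk | hk
  · rw [if_pos hk]
    by_cases hk0 : k = 0
    · subst hk0; simp
    · rw [if_neg hk0, if_pos (by omega : 1 ≤ k)]
  · rw [if_neg (by omega), if_pos (by omega : 1 ≤ k)]
    rw [ind_of_rep (rep_of_ge hp hpq hco (by omega)),
      ind_of_rep (rep_of_ge hp hpq hco (by omega))]
    ring

include hp hpq hco in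
lemma main_id : ((X : Polynomial ℤ) ^ (p * q) - 1) * (X - 1) =
    ((X : Polynomial ℤ) ^ p - 1) * ((X : Polynomial ℤ) ^ q - 1) * D p q := by
  apply Polynomial.coe_injective
  show ((((X : Polynomial ℤ) ^ (p * q) - 1) * (X - 1) : Polynomial ℤ) : PowerSeries ℤ) =
    ((((X : Polynomial ℤ) ^ p - 1) * ((X : Polynomial ℤ) ^ q - 1) * D p q : Polynomial ℤ) :
      PowerSeries ℤ)
  simp only [Polynomial.coe_mul, Polynomial.coe_sub, Polynomial.coe_one, Polynomial.coe_pow,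
    Polynomial.coe_X]
  rw [coe_D hp hpq hco]
  linear_combination (PowerSeries.X - 1) * key_ps hp hpq hco

lemma c_zero : c p q 0 = 1 := by
  unfold c
  rw [ind_of_rep (rep_zero p q), if_pos rfl]
  ring

include hp hpq hco in
lemma c_top : c p q ((p - 1) * (q - 1)) = 1 := by
  have hN2 : 2 ≤ (p - 1) * (q - 1) :=
    le_trans (by omega) (Nat.mul_le_mul (by omega : 1 ≤ p - 1) (by omega : 2 ≤ q - 1))
  unfold c
  rw [if_neg (by omega), ind_of_rep (rep_of_ge hp hpq hco le_rfl),
    ind_of_not_rep (not_rep_frob hp hpq hco)]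
  ring

end PQ2
end AlexAux

open AlexAux in
theorem alexander_torus_alternating (p q : ℕ) (hp : 1 < p) (hpq : p < q)
    (hco : Nat.Coprime p q) :
    ∃ (n : ℕ) (a : ℕ → ℕ),
      (∀ i j, i < j → j ≤ 2 * n → a j < a i) ∧
      a 0 = (p - 1) * (q - 1) ∧
      a (2 * n) = 0 ∧
      ((X : Polynomial ℤ) ^ (p * q) - 1) * (X - 1) =
        ((X : Polynomial ℤ) ^ p - 1) * ((X : Polynomial ℤ) ^ q - 1) *
          ∑ i ∈ Finset.range (2 * n + 1), (-1 : Polynomial ℤ) ^ i * X ^ (a i) := by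
  classical
  set N := (p - 1) * (q - 1) with hNdef
  set T := (Finset.range (N + 1)).filter (fun k => c p q k ≠ 0) with hTdef
  have hN2 : 2 ≤ N :=
    le_trans (by omega) (Nat.mul_le_mul (by omega : 1 ≤ p - 1) (by omega : 2 ≤ q - 1))
  have h0T : 0 ∈ T := by
    rw [hTdef, Finset.mem_filter, Finset.mem_range]
    exact ⟨by omega, by rw [c_zero]; norm_num⟩
  have hNT : N ∈ T := by
    rw [hTdef, Finset.mem_filter, Finset.mem_range]
    exact ⟨by omega, by rw [c_top hp hpq hco]; norm_num⟩
  have hmemN : ∀ k ∈ T, k ≤ N := by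
    intro k hk
    rw [hTdef, Finset.mem_filter, Finset.mem_range] at hk
    omega
  have hmemc : ∀ k ∈ T, c p q k ≠ 0 := by
    intro k hk
    rw [hTdef, Finset.mem_filter] at hk
    exact hk.2
  obtain ⟨M, hMpos, b, hbmono, hbmem, hbsurj, hb0, hblast⟩ :
      ∃ (M : ℕ) (hMpos : 0 < M) (b : Fin M → ℕ), StrictMono b ∧ (∀ i, b i ∈ T) ∧
        (∀ x ∈ T, ∃ i, b i = x) ∧ b ⟨0, hMpos⟩ = 0 ∧ b ⟨M - 1, by omega⟩ = N := by
    refine ⟨T.card, Finset.card_pos.2 ⟨0, h0T⟩, fun i => T.orderEmbOfFin rfl i,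
      (T.orderEmbOfFin rfl).strictMono, fun i => Finset.orderEmbOfFin_mem T rfl i, ?_, ?_, ?_⟩
    · intro x hx
      have hr := Finset.range_orderEmbOfFin T (rfl : T.card = T.card)
      have hx' : x ∈ Set.range (T.orderEmbOfFin rfl) := by rw [hr]; exact_mod_cast hx
      exact hx'
    · have h := Finset.orderEmbOfFin_zero (rfl : T.card = T.card) (Finset.card_pos.2 ⟨0, h0T⟩)
      have h2 : T.min' ⟨0, h0T⟩ = 0 := le_antisymm (Finset.min'_le T 0 h0T) (Nat.zero_le _)
      exact h.trans h2
    · have h := Finset.orderEmbOfFin_last (rfl : T.card = T.card) (Finset.card_pos.2 ⟨0, h0T⟩)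
      have h2 : T.max' ⟨0, h0T⟩ = N :=
        le_antisymm (Finset.max'_le _ _ N hmemN) (Finset.le_max' T N hNT)
      exact h.trans h2
  -- the indicator is constant along runs of zero `c`
  have hstep : ∀ u d : ℕ, (∀ w, u < w → w ≤ u + d → (w ∉ T ∧ w ≤ N)) →
      ind p q (u + d) = ind p q u := by
    intro u d
    induction d with
    | zero => intro _; rfl
    | succ x IH =>
      intro hcond
      have h1 : u + (x + 1) ∉ T := (hcond (u + x + 1) (by omega) (by omega)).1
      have h2 : u + (x + 1) ≤ N := (hcond (u + x + 1) (by omega) (by omega)).2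
      have hcx : c p q (u + x + 1) = 0 := by
        by_contra hne
        exact h1 (by rw [hTdef, Finset.mem_filter, Finset.mem_range]; exact ⟨by omega, hne⟩)
      unfold c at hcx
      rw [if_neg (by omega)] at hcx
      simp only [Nat.add_sub_cancel] at hcx
      have h3 : ind p q (u + x + 1) = ind p q (u + x) := by omega
      have h4 : u + (x + 1) = u + x + 1 := by omega
      rw [h4, h3]
      exact IH (fun w hw1 hw2 => hcond w hw1 (by omega))
  -- alternating signs
  have halt : ∀ (m : ℕ) (hm : m < M), c p q (b ⟨m, hm⟩) = (-1) ^ m ∧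
      ind p q (b ⟨m, hm⟩) = if Even m then 1 else 0 := by
    intro m
    induction m with
    | zero =>
      intro hm
      have hb0' : b ⟨0, hm⟩ = 0 := hb0
      rw [hb0']
      refine ⟨by rw [c_zero]; norm_num, ?_⟩
      rw [if_pos Even.zero, ind_of_rep (rep_zero p q)]
    | succ m IH =>
      intro hm
      have hmlt : m < M := by omega
      obtain ⟨IH1, IH2⟩ := IH hmlt
      have hlt : b ⟨m, hmlt⟩ < b ⟨m + 1, hm⟩ := hbmono (by rw [Fin.mk_lt_mk]; omega)
      set z := b ⟨m, hmlt⟩ with hz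
      set y := b ⟨m + 1, hm⟩ with hy
      have hyN : y ≤ N := hmemN _ (hbmem ⟨m + 1, hm⟩)
      have hnomid : ∀ w, z < w → w ≤ z + (y - 1 - z) → (w ∉ T ∧ w ≤ N) := by
        intro w hw1 hw2
        refine ⟨?_, by omega⟩
        intro hmem
        obtain ⟨j, hj⟩ := hbsurj _ hmem
        have h1 : (⟨m, hmlt⟩ : Fin M) < j := by
          rw [← hbmono.lt_iff_lt, hj, ← hz]
          omega
        have h2 : j < (⟨m + 1, hm⟩ : Fin M) := by
          rw [← hbmono.lt_iff_lt, hj, ← hy]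
          omega
        rw [Fin.lt_def] at h1 h2
        simp only [Fin.val_mk] at h1 h2
        omega
      have hindc : ind p q (y - 1) = ind p q z := by
        have := hstep z (y - 1 - z) hnomid
        have he : z + (y - 1 - z) = y - 1 := by omega
        rw [he] at this
        exact this
      have hcy : c p q y = ind p q y - ind p q z := by
        unfold c
        rw [if_neg (by omega), hindc]
      have hcyne : c p q y ≠ 0 := hmemc _ (hbmem ⟨m + 1, hm⟩)
      rcases Nat.even_or_odd m with hev | hod
      · rw [if_pos hev] at IH2
        have hodds : Odd (m + 1) := Even.add_one hev
        have hnev : ¬ Even (m + 1) := Nat.not_even_iff_odd.mpr hodds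
        rcases ind_zero_or_one p q y with hiy | hiy
        · have h1 : c p q y = -1 := by rw [hcy, hiy, IH2]; ring
          exact ⟨by rw [h1, Odd.neg_one_pow hodds], by rw [if_neg hnev, hiy]⟩
        · exact absurd (by rw [hcy, hiy, IH2]; ring) hcyne
      · rw [if_neg (Nat.not_even_iff_odd.mpr hod)] at IH2
        have hevs : Even (m + 1) := Odd.add_one hod
        rcases ind_zero_or_one p q y with hiy | hiy
        · exact absurd (by rw [hcy, hiy, IH2]; ring) hcyne
        · have h1 : c p q y = 1 := by rw [hcy, hiy, IH2]; ring
          exact ⟨by rw [h1, Even.neg_one_pow hevs], by rw [if_pos hevs, hiy]⟩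
  -- parity of M
  have heven : Even (M - 1) := by
    have h := (halt (M - 1) (by omega)).1
    rw [hblast, c_top hp hpq hco] at h
    rcases Nat.even_or_odd (M - 1) with he | ho
    · exact he
    · rw [Odd.neg_one_pow ho] at h
      norm_num at h
  obtain ⟨n, hn⟩ := heven
  have hM : M = 2 * n + 1 := by omega
  refine ⟨n, fun i => b ⟨2 * n - i, by omega⟩, ?_, ?_, ?_, ?_⟩
  · intro i j hij hj
    exact hbmono (by rw [Fin.mk_lt_mk]; omega)
  · show b ⟨2 * n - 0, by omega⟩ = N
    have he : (⟨2 * n - 0, by omega⟩ : Fin M) = ⟨M - 1, by omega⟩ := by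
      apply Fin.ext
      simp only [Fin.val_mk]
      omega
    rw [he]
    exact hblast
  · show b ⟨2 * n - 2 * n, by omega⟩ = 0
    have he : (⟨2 * n - 2 * n, by omega⟩ : Fin M) = ⟨0, hMpos⟩ := by
      apply Fin.ext
      simp only [Fin.val_mk]
      omega
    rw [he]
    exact hb0
  · rw [main_id hp hpq hco]
    congr 1
    have hDT : D p q = ∑ k ∈ T, Polynomial.C (c p q k) * X ^ k := by
      unfold D
      rw [← hNdef]
      refine (Finset.sum_subset (Finset.filter_subset _ _) ?_).symm
      intro x hx hnx
      have hcx : c p q x = 0 := by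
        by_contra h
        exact hnx (Finset.mem_filter.2 ⟨hx, h⟩)
      rw [hcx]
      simp
    rw [hDT]
    refine (Finset.sum_bij (fun i _ => b ⟨2 * n - i, by omega⟩) ?_ ?_ ?_ ?_).symm
    · intro i hi
      exact hbmem _
    · intro i hi j hj hij
      rw [Finset.mem_range] at hi hj
      have h2 := hbmono.injective hij
      rw [Fin.mk.injEq] at h2
      omega
    · intro x hx
      obtain ⟨jj, hjj⟩ := hbsurj x hx
      refine ⟨2 * n - (jj : ℕ), Finset.mem_range.2 (by omega), ?_⟩
      show b ⟨2 * n - (2 * n - (jj : ℕ)), by omega⟩ = x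
      rw [← hjj]
      congr 1
      apply Fin.ext
      have h2 := jj.2
      simp only [Fin.val_mk]
      omega
    · intro i hi
      rw [Finset.mem_range] at hi
      show (-1 : Polynomial ℤ) ^ i * X ^ (b ⟨2 * n - i, by omega⟩ : ℕ) =
        Polynomial.C (c p q (b ⟨2 * n - i, by omega⟩)) * X ^ (b ⟨2 * n - i, by omega⟩ : ℕ)
      have hpar : ((-1 : ℤ)) ^ (2 * n - i) = (-1) ^ i := by
        have h2 : ((-1 : ℤ)) ^ (2 * n - i) * (-1) ^ i = 1 := by
          rw [← pow_add]
          have h3 : 2 * n - i + i = 2 * n := by omega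
          rw [h3]
          exact Even.neg_one_pow (even_two_mul n)
        have h4 : ((-1 : ℤ)) ^ i * (-1) ^ i = 1 := by
          rw [← pow_add]
          exact Even.neg_one_pow ⟨i, rfl⟩
        calc ((-1 : ℤ)) ^ (2 * n - i) = (-1) ^ (2 * n - i) * ((-1) ^ i * (-1) ^ i) := by
              rw [h4, mul_one]
          _ = ((-1) ^ (2 * n - i) * (-1) ^ i) * (-1) ^ i := by ring
          _ = (-1) ^ i := by rw [h2, one_mul]
      have hC : (Polynomial.C ((-1 : ℤ) ^ i) : Polynomial ℤ) = (-1) ^ i := by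
        simp
      rw [(halt (2 * n - i) (by omega)).1, hpar, hC]
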